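/- The map from finite sequences (m₁,…,m_k) with m₁, m_k positive integers and m₂,…,m_{k-1} nonnegative integers (for k ≥ 2; for k = 1 just m₁ a positive integer) to pairs (p,q) of relatively prime positive integers with p ≥ q, given by sending (m₁,…,m_k) to the numerator and denominator of [a₁,…,a_k]⁻ (with a_i defined from m_i as: a₁ = m₁ when k = 1; otherwise a₁ = m₁+1, a_k = m_k+1, a_i = m_i+2 for interior i), is a bijection. -/

import Mathlib

/-- The negative continued fraction `[a₁, …, a_k]⁻`, with `1/0 = 0` junk convention. -/
def ncf : List ℤ → ℚ
  | [] => 0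
  | a :: l => (a : ℚ) - 1 / ncf l

/-- From multipliers `m₁, …, m_k` form `a₁, …, a_k`: if `k = 1` then `a₁ = m₁`; if `k > 1`
then `a₁ = m₁ + 1`, `a_k = m_k + 1`, and `aᵢ = mᵢ + 2` for `1 < i < k`. -/
def mkA (m : List ℤ) : List ℤ :=
  if m.length ≤ 1 then m
  else m.mapIdx fun i x => if i = 0 ∨ i = m.length - 1 then x + 1 else x + 2

/-- A valid multiplier sequence: nonempty, `m₁ > 0`, `m_k > 0`, interior `mᵢ ≥ 0`. -/
def GoodM (m : List ℤ) : Prop :=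
  m ≠ [] ∧ 0 < m.headI ∧ 0 < m.getLast! ∧
    ∀ i, 0 < i → i + 1 < m.length → 0 ≤ m.getD i 0

/-- The numerator and denominator (in lowest terms) of `[a₁, …, a_k]⁻`. -/
def toPair (m : List ℤ) : ℕ × ℕ :=
  ((ncf (mkA m)).num.natAbs, (ncf (mkA m)).den)

/-! ### Auxiliary definitions -/

/-- Valid `a`-sequences: a single entry `≥ 1`, or at least two entries all `≥ 2`. -/
def GoodA (l : List ℤ) : Prop :=
  (∃ a : ℤ, 1 ≤ a ∧ l = [a]) ∨ (2 ≤ l.length ∧ ∀ a ∈ l, 2 ≤ a)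

/-- Numerator and denominator of `ncf l`. -/
def pairOf (l : List ℤ) : ℕ × ℕ := ((ncf l).num.natAbs, (ncf l).den)

/-- The inverse of `mkA`. -/
def mkM (l : List ℤ) : List ℤ :=
  if l.length ≤ 1 then l
  else l.mapIdx fun i x => if i = 0 ∨ i = l.length - 1 then x - 1 else x - 2

/-! ### Basic facts about `ncf` -/

lemma ncf_nil : ncf [] = 0 := rfl

lemma ncf_cons (a : ℤ) (l : List ℤ) : ncf (a :: l) = (a : ℚ) - 1 / ncf l := rfl

lemma ncf_singleton (a : ℤ) : ncf [a] = (a : ℚ) := by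
  rw [ncf_cons, ncf_nil]; simp

lemma ncf_gt_one : ∀ l : List ℤ, l ≠ [] → (∀ a ∈ l, 2 ≤ a) → 1 < ncf l
  | [], h, _ => absurd rfl h
  | [a], _, h2 => by
      have : (2:ℚ) ≤ (a:ℚ) := by exact_mod_cast h2 a (by simp)
      rw [ncf_singleton]; linarith
  | a :: b :: t, _, h2 => by
      have ih : 1 < ncf (b :: t) :=
        ncf_gt_one (b :: t) (by simp) (fun x hx => h2 x (List.mem_cons_of_mem a hx))
      have ha : (2:ℚ) ≤ (a:ℚ) := by exact_mod_cast h2 a (by simp)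
      have h0 : 0 < ncf (b :: t) := lt_trans one_pos ih
      have hlt : 1 / ncf (b :: t) < 1 := by rw [div_lt_one h0]; exact ih
      have hpos : 0 < 1 / ncf (b :: t) := by positivity
      rw [ncf_cons]
      linarith

lemma den_lt_num {x : ℚ} (h : 1 < x) : (x.den : ℤ) < x.num := by
  have hd : (0:ℚ) < (x.den:ℚ) := by positivity
  have h2 : (x.den:ℚ) < (x.num:ℚ) := by
    rw [← Rat.num_div_den x] at h
    exact (one_lt_div hd).mp h
  exact_mod_cast h2

lemma sub_num_den (a : ℤ) (x : ℚ) (hx : 0 < x) :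
    ((a:ℚ) - 1/x).num = a * x.num - x.den ∧ ((a:ℚ) - 1/x).den = x.num.natAbs := by
  have hnum : 0 < x.num := Rat.num_pos.mpr hx
  have hnn : (x.num : ℚ) ≠ 0 := by exact_mod_cast hnum.ne'
  have h1x : 1/x = (x.den:ℚ)/(x.num:ℚ) := by
    conv_lhs => rw [← Rat.num_div_den x]
    rw [one_div_div]
  have key : (a:ℚ) - 1/x = ((a * x.num - x.den : ℤ) : ℚ) / ((x.num : ℤ) : ℚ) := by
    rw [h1x]
    push_cast
    field_simp
  have cop : Nat.Coprime (a * x.num - x.den).natAbs x.num.natAbs := by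
    have h1 : IsCoprime (x.den : ℤ) x.num := by
      rw [Int.isCoprime_iff_gcd_eq_one, Int.gcd_comm]
      exact x.reduced
    have h2 : IsCoprime (-(x.den:ℤ) + x.num * a) x.num := (h1.neg_left).add_mul_left_left a
    have h3 : a * x.num - x.den = -(x.den:ℤ) + x.num * a := by ring
    rw [h3]
    exact Int.isCoprime_iff_gcd_eq_one.mp h2
  constructor
  · rw [key]; exact Rat.num_div_eq_of_coprime hnum cop
  · rw [key]
    have := Rat.den_div_eq_of_coprime hnum cop
    omega

lemma ncf_cons_num_den (a : ℤ) (l : List ℤ) (hne : l ≠ []) (h2 : ∀ b ∈ l, 2 ≤ b) :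
    (ncf (a :: l)).num = a * (ncf l).num - (ncf l).den ∧
      (ncf (a :: l)).den = (ncf l).num.natAbs := by
  have h1 := ncf_gt_one l hne h2
  have := sub_num_den a (ncf l) (lt_trans one_pos h1)
  rwa [← ncf_cons] at this

/-! ### `GoodA` helpers -/

lemma goodA_entries (l : List ℤ) (h : GoodA l) (h2 : 2 ≤ (ncf l).num.natAbs) :
    l ≠ [] ∧ ∀ b ∈ l, 2 ≤ b := by
  rcases h with ⟨a, ha, rfl⟩ | ⟨hlen, hall⟩
  · refine ⟨by simp, ?_⟩
    intro b hb
    simp only [List.mem_singleton] at hb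
    subst hb
    rw [ncf_singleton] at h2
    simp only [Rat.num_intCast] at h2
    omega
  · exact ⟨by rintro rfl; simp at hlen, hall⟩

lemma goodA_of_entries (t : List ℤ) (h : t ≠ []) (h2 : ∀ c ∈ t, 2 ≤ c) : GoodA t := by
  match t with
  | [c] => exact Or.inl ⟨c, by have := h2 c (by simp); omega, rfl⟩
  | c :: d :: t' => exact Or.inr ⟨by simp, h2⟩

lemma pairOf_spec (l : List ℤ) (h : GoodA l) :
    0 < (pairOf l).2 ∧ (pairOf l).2 ≤ (pairOf l).1 ∧
      Nat.Coprime (pairOf l).1 (pairOf l).2 := by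
  refine ⟨(ncf l).pos, ?_, (ncf l).reduced⟩
  rcases h with ⟨a, ha, rfl⟩ | ⟨hlen, hall⟩
  · simp only [pairOf, ncf_singleton, Rat.num_intCast, Rat.den_intCast]
    omega
  · have hne : l ≠ [] := by rintro rfl; simp at hlen
    have h1 := ncf_gt_one l hne hall
    have := den_lt_num h1
    simp only [pairOf]
    omega

/-! ### The key existence and uniqueness lemma -/

lemma key (q : ℕ) : ∀ p : ℕ, 0 < q → q ≤ p → Nat.Coprime p q →
    ∃! l : List ℤ, GoodA l ∧ pairOf l = (p, q) := by
  induction q using Nat.strong_induction_on with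
  | _ q ih =>
  intro p hq hqp hcop
  by_cases hq1 : q = 1
  · subst hq1
    refine ⟨[(p:ℤ)], ⟨Or.inl ⟨p, by exact_mod_cast hqp, rfl⟩, ?_⟩, ?_⟩
    · simp [pairOf, ncf_singleton]
    · rintro l ⟨hG, hpair⟩
      rcases hG with ⟨a, ha, rfl⟩ | ⟨hlen, hall⟩
      · simp only [pairOf, ncf_singleton, Rat.num_intCast, Rat.den_intCast,
          Prod.mk.injEq] at hpair
        have : a = (p:ℤ) := by omega
        rw [this]
      · exfalso
        match l, hlen with
        | a :: b :: t, _ =>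
          have htne : (b :: t) ≠ [] := by simp
          have ht2 : ∀ c ∈ (b :: t), 2 ≤ c := fun c hc => hall c (List.mem_cons_of_mem a hc)
          obtain ⟨hn, hd⟩ := ncf_cons_num_den a (b :: t) htne ht2
          have hgt := ncf_gt_one (b :: t) htne ht2
          have hlt := den_lt_num hgt
          have hdpos : 0 < (ncf (b :: t)).den := (ncf (b :: t)).pos
          have : (ncf (a :: b :: t)).den = (p, 1).2 := by rw [← hpair]; rfl
          simp only at this
          omega
  · have hq2 : 2 ≤ q := by omega
    -- p > q
    have hqlt : q < p := by
      rcases lt_or_eq_of_le hqp with h | h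
      · exact h
      · exfalso
        subst h
        simp [Nat.Coprime, Nat.gcd_self] at hcop
        omega
    have hndvd : ¬ (q ∣ p) := by
      intro hd
      have h1 : q ∣ Nat.gcd p q := Nat.dvd_gcd hd dvd_rfl
      rw [hcop] at h1
      exact absurd (Nat.le_of_dvd one_pos h1) (by omega)
    have hpm : 0 < p % q := Nat.pos_of_ne_zero (fun h => hndvd (Nat.dvd_of_mod_eq_zero h))
    have hpmlt : p % q < q := Nat.mod_lt _ (by omega)
    set q' := q - p % q with hq'def
    have hq'1 : 1 ≤ q' := by omega
    have hq'lt : q' < q := by omega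
    set a := p / q + 1 with hadef
    have hdam := Nat.div_add_mod p q
    have haq : a * q = p + q' := by
      have h1 : a * q = q * (p / q) + q := by rw [hadef, add_mul, one_mul, mul_comm]
      omega
    have ha2 : 2 ≤ a := by
      have : 1 ≤ p / q := (Nat.one_le_div_iff (by omega)).mpr hqp
      omega
    have hcop' : Nat.Coprime q q' := by
      have hd1 : Nat.gcd q q' ∣ p % q := by
        have := Nat.dvd_sub (Nat.gcd_dvd_left q q') (Nat.gcd_dvd_right q q')
        simpa [hq'def, Nat.sub_sub_self (le_of_lt hpmlt)] using this
      have hd2 : Nat.gcd q q' ∣ Nat.gcd (p % q) q :=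
        Nat.dvd_gcd hd1 (Nat.gcd_dvd_left q q')
      have h3 : Nat.gcd (p % q) q = 1 := by
        rw [← Nat.gcd_rec]
        exact Nat.coprime_comm.mp hcop
      rw [h3] at hd2
      exact Nat.dvd_one.mp hd2
    obtain ⟨l', ⟨hG', hpair'⟩, huniq'⟩ :=
      ih q' hq'lt q (by omega) (le_of_lt hq'lt) hcop'
    have hpair'1 : (ncf l').num.natAbs = q := congrArg Prod.fst hpair'
    have hpair'2 : (ncf l').den = q' := congrArg Prod.snd hpair'
    obtain ⟨hl'ne, hl'2⟩ := goodA_entries l' hG' (by omega)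
    have hgt1 : 1 < ncf l' := ncf_gt_one l' hl'ne hl'2
    have hnumpos : 0 < (ncf l').num := Rat.num_pos.mpr (lt_trans one_pos hgt1)
    have hnum' : (ncf l').num = (q:ℤ) := by omega
    refine ⟨(a:ℤ) :: l', ⟨?_, ?_⟩, ?_⟩
    · refine Or.inr ⟨?_, ?_⟩
      · match l', hl'ne with
        | c :: t', _ => simp
      · intro b hb
        rcases List.mem_cons.mp hb with rfl | hb
        · exact_mod_cast ha2
        · exact hl'2 b hb
    · obtain ⟨hn, hd⟩ := ncf_cons_num_den (a:ℤ) l' hl'ne hl'2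
      have hnv : (ncf ((a:ℤ) :: l')).num = (p:ℤ) := by
        rw [hn, hnum', hpair'2]
        have : (a:ℤ) * q = (p:ℤ) + q' := by exact_mod_cast haq
        omega
      have hdv : (ncf ((a:ℤ) :: l')).den = q := by rw [hd, hnum']; simp
      simp [pairOf, hnv, hdv]
    · rintro l ⟨hG, hpair⟩
      rcases hG with ⟨b, hb, rfl⟩ | ⟨hlen, hall⟩
      · exfalso
        simp only [pairOf, ncf_singleton, Rat.num_intCast, Rat.den_intCast,
          Prod.mk.injEq] at hpair
        omega
      · match l, hlen with
        | b :: t, _ =>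
        have htne : t ≠ [] := by
          match t, hlen with
          | c :: t', _ => simp
        have ht2 : ∀ c ∈ t, 2 ≤ c := fun c hc => hall c (List.mem_cons_of_mem b hc)
        obtain ⟨hn, hd⟩ := ncf_cons_num_den b t htne ht2
        have htgt : 1 < ncf t := ncf_gt_one t htne ht2
        have hQlt := den_lt_num htgt
        have hQpos : 0 < (ncf t).den := (ncf t).pos
        have hbt : 1 < ncf (b :: t) := ncf_gt_one (b :: t) (by simp) hall
        have hbtnum : 0 < (ncf (b :: t)).num := Rat.num_pos.mpr (lt_trans one_pos hbt)
        have hp1 : (ncf (b :: t)).num.natAbs = p := congrArg Prod.fst hpair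
        have hp2 : (ncf (b :: t)).den = q := congrArg Prod.snd hpair
        have hPt : (ncf t).num = (q:ℤ) := by
          rw [hd] at hp2
          have : 0 < (ncf t).num := by omega
          omega
        have hnum_eq : (p:ℤ) = b * q - (ncf t).den := by
          rw [← hPt]
          omega
        have haqZ : (a:ℤ) * q = (p:ℤ) + q' := by exact_mod_cast haq
        have hkey : ((b:ℤ) - a) * q = ((ncf t).den : ℤ) - q' := by
          have h5 : (b:ℤ) * q - (ncf t).den = (a:ℤ) * q - q' := by omega
          linear_combination h5
        have hQltq : ((ncf t).den : ℤ) < q := by omega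
        have hba : b = (a:ℤ) := by
          rcases lt_trichotomy b (a:ℤ) with h | h | h
          · exfalso
            have h6 : (b:ℤ) - a ≤ -1 := by omega
            have h7 : ((b:ℤ) - a) * q ≤ -1 * q := by
              apply mul_le_mul_of_nonneg_right h6 (by positivity)
            have : (1:ℤ) ≤ (ncf t).den := by omega
            have : ((q':ℕ):ℤ) < q := by exact_mod_cast hq'lt
            omega
          · exact h
          · exfalso
            have h6 : (1:ℤ) ≤ (b:ℤ) - a := by omega
            have h7 : (1:ℤ) * q ≤ ((b:ℤ) - a) * q := by
              apply mul_le_mul_of_nonneg_right h6 (by positivity)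
            have : (1:ℤ) ≤ ((q':ℕ):ℤ) := by exact_mod_cast hq'1
            omega
        have hQt : ((ncf t).den : ℤ) = (q':ℕ) := by
          rw [hba] at hkey
          omega
        have htG : GoodA t := goodA_of_entries t htne ht2
        have htpair : pairOf t = (q, q') := by
          simp only [pairOf, Prod.mk.injEq]
          constructor
          · omega
          · omega
        have := huniq' t ⟨htG, htpair⟩
        rw [hba, this]

/-! ### Bijectivity of `pairOf` on `GoodA` -/

lemma bijOn_pairOf :
    Set.BijOn pairOf {l : List ℤ | GoodA l}
      {pq : ℕ × ℕ | 0 < pq.2 ∧ pq.2 ≤ pq.1 ∧ Nat.Coprime pq.1 pq.2} := by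
  refine ⟨fun l hl => pairOf_spec l hl, ?_, ?_⟩
  · intro l1 h1 l2 h2 heq
    obtain ⟨hqpos, hqp, hcop⟩ := pairOf_spec l1 h1
    obtain ⟨l0, _, hu⟩ := key (pairOf l1).2 (pairOf l1).1 hqpos hqp hcop
    have e1 := hu l1 ⟨h1, rfl⟩
    have e2 := hu l2 ⟨h2, by rw [← heq]⟩
    rw [e1, e2]
  · rintro ⟨pp, qq⟩ ⟨h1, h2, h3⟩
    obtain ⟨l, ⟨hG, hpair⟩, -⟩ := key qq pp h1 h2 h3
    exact ⟨l, hG, hpair⟩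

/-! ### `mkA` as a bijection -/

lemma length_mkA (m : List ℤ) : (mkA m).length = m.length := by
  unfold mkA
  split
  · rfl
  · simp

lemma length_mkM (l : List ℤ) : (mkM l).length = l.length := by
  unfold mkM
  split
  · rfl
  · simp

lemma getElem_mkA (m : List ℤ) (i : ℕ) (h : i < m.length)
    (h' : i < (mkA m).length := by rwa [length_mkA]) :
    (mkA m)[i] =
      if m.length ≤ 1 then m[i]
      else if i = 0 ∨ i = m.length - 1 then m[i] + 1 else m[i] + 2 := by
  by_cases hc : m.length ≤ 1
  · simp only [mkA, if_pos hc]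
  · simp only [mkA, if_neg hc, List.getElem_mapIdx]

lemma getElem_mkM (l : List ℤ) (i : ℕ) (h : i < l.length)
    (h' : i < (mkM l).length := by rwa [length_mkM]) :
    (mkM l)[i] =
      if l.length ≤ 1 then l[i]
      else if i = 0 ∨ i = l.length - 1 then l[i] - 1 else l[i] - 2 := by
  by_cases hc : l.length ≤ 1
  · simp only [mkM, if_pos hc]
  · simp only [mkM, if_neg hc, List.getElem_mapIdx]

lemma mkA_mkM (l : List ℤ) : mkA (mkM l) = l := by
  have hlen : (mkM l).length = l.length := length_mkM l
  apply List.ext_getElem (by rw [length_mkA, hlen])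
  intro i h1 h2
  rw [getElem_mkA (mkM l) i (by omega) h1]
  rw [getElem_mkM l i h2]
  simp only [hlen]
  split_ifs <;> omega

lemma mkM_mkA (m : List ℤ) : mkM (mkA m) = m := by
  have hlen : (mkA m).length = m.length := length_mkA m
  apply List.ext_getElem (by rw [length_mkM, hlen])
  intro i h1 h2
  rw [getElem_mkM (mkA m) i (by omega) h1]
  rw [getElem_mkA m i h2]
  simp only [hlen]
  split_ifs <;> omega

lemma getLast!_eq_getElem (l : List ℤ) (h : l ≠ []) (h2 : l.length - 1 < l.length) :
    l.getLast! = l[l.length - 1] := by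
  rw [List.getLast!_of_getLast? (List.getLast?_eq_getLast h), List.getLast_eq_getElem]

lemma goodM_iff (m : List ℤ) : GoodM m ↔ m ≠ [] ∧
    ∀ i (h : i < m.length), (if i = 0 ∨ i = m.length - 1 then 1 else 0 : ℤ) ≤ m[i] := by
  constructor
  · rintro ⟨hne, hh, hl, hint⟩
    have hpos : 0 < m.length := List.length_pos_iff.mpr hne
    refine ⟨hne, ?_⟩
    intro i hi
    have hlast := getLast!_eq_getElem m hne (by omega)
    split_ifs with hc
    · rcases hc with rfl | rfl
      · match m, hne, hi, hh with
        | x :: t, _, _, hh => simp [List.headI] at hh ⊢; omega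
      · rw [← hlast]
        exact hl
    · push_neg at hc
      have := hint i (by omega) (by omega)
      rwa [List.getD_eq_getElem _ _ hi] at this
  · rintro ⟨hne, h⟩
    have hpos : 0 < m.length := List.length_pos_iff.mpr hne
    refine ⟨hne, ?_, ?_, ?_⟩
    · match m, hne with
      | x :: t, _ =>
        have := h 0 (by simp)
        simp [List.headI] at this ⊢; omega
    · rw [getLast!_eq_getElem m hne (by omega)]
      have := h (m.length - 1) (by omega)
      rw [if_pos (Or.inr rfl)] at this
      omega
    · intro i hi0 hi1
      have := h i (by omega)
      rw [if_neg (by omega)] at this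
      rw [List.getD_eq_getElem _ _ (by omega)]
      omega

lemma goodA_iff (l : List ℤ) : GoodA l ↔ l ≠ [] ∧
    ∀ i (h : i < l.length), (if l.length = 1 then 1 else 2 : ℤ) ≤ l[i] := by
  constructor
  · rintro (⟨a, ha, rfl⟩ | ⟨hlen, hall⟩)
    · refine ⟨by simp, ?_⟩
      intro i hi
      simp only [List.length_singleton] at hi ⊢
      have : i = 0 := by omega
      subst this
      simpa using ha
    · refine ⟨by rintro rfl; simp at hlen, ?_⟩
      intro i hi
      rw [if_neg (by omega)]
      exact hall _ (List.getElem_mem _)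
  · rintro ⟨hne, h⟩
    by_cases h1 : l.length = 1
    · obtain ⟨a, rfl⟩ := List.length_eq_one_iff.mp h1
      exact Or.inl ⟨a, by simpa using h 0 (by simp), rfl⟩
    · refine Or.inr ⟨by have : 0 < l.length := List.length_pos_iff.mpr hne; omega, ?_⟩
      intro b hb
      obtain ⟨i, hi, rfl⟩ := List.mem_iff_getElem.mp hb
      have := h i hi
      rwa [if_neg h1] at this

lemma goodA_mkA_iff (m : List ℤ) : GoodA (mkA m) ↔ GoodM m := by
  rw [goodA_iff, goodM_iff]
  have hlen : (mkA m).length = m.length := length_mkA m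
  constructor
  · rintro ⟨hne, h⟩
    have hne' : m ≠ [] := by
      rintro rfl
      exact hne rfl
    have hpos : 0 < m.length := List.length_pos_iff.mpr hne'
    refine ⟨hne', ?_⟩
    intro i hi
    have h2 := h i (by omega)
    rw [getElem_mkA m i hi] at h2
    rw [hlen] at h2
    split_ifs at h2 ⊢ <;> omega
  · rintro ⟨hne, h⟩
    have hpos : 0 < m.length := List.length_pos_iff.mpr hne
    have hne' : mkA m ≠ [] := by
      intro h0
      have := congrArg List.length h0
      rw [hlen] at this
      simp only [List.length_nil] at this
      omega
    refine ⟨hne', ?_⟩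
    intro i hi
    rw [hlen] at hi
    have h2 := h i hi
    rw [getElem_mkA m i hi]
    rw [hlen]
    split_ifs at h2 ⊢ <;> omega

lemma bijOn_mkA : Set.BijOn mkA {m : List ℤ | GoodM m} {l : List ℤ | GoodA l} := by
  refine ⟨fun m hm => (goodA_mkA_iff m).mpr hm, ?_, ?_⟩
  · intro m1 _ m2 _ heq
    rw [← mkM_mkA m1, ← mkM_mkA m2, heq]
  · intro l hl
    refine ⟨mkM l, ?_, mkA_mkM l⟩
    have : GoodA (mkA (mkM l)) := by rwa [mkA_mkM]
    exact (goodA_mkA_iff (mkM l)).mp this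

/-- The map sending a valid multiplier sequence `(m₁, …, m_k)` to the pair `(p, q)` with
`p/q = [a₁, …, a_k]⁻` in lowest terms is a bijection onto the set of pairs of relatively
prime positive integers `p ≥ q`. -/
theorem stmt16 :
    Set.BijOn toPair {m : List ℤ | GoodM m}
      {pq : ℕ × ℕ | 0 < pq.2 ∧ pq.2 ≤ pq.1 ∧ Nat.Coprime pq.1 pq.2} := by
  have h := bijOn_pairOf.comp bijOn_mkA
  have he : toPair = pairOf ∘ mkA := rfl
  rw [he]
  exact h
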